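/- Let Ω be a frame and (M, A, t) a symmetric Ω-category as above (M(a,b) ≤ ta ⊓ tb, ta ≤ M(a,a), M(a,b) ⊓ M(b,c) ≤ M(a,c), M symmetric). Let (a_i)_{i∈I} be a matching family, i.e. t a_i ⊓ t a_j ≤ M(a_i, a_j) for all i,j. Define σ(b) = ⨆_{i∈I} M(b, a_i). Then σ is a symmetric singleton of type U = ⨆_i t a_i: (i) M(b,c) ⊓ σ(c) ≤ σ(b); (ii) σ(b) ⊓ σ(c) ≤ M(b,c); (iii) U ≤ ⨆_b σ(b). -/
import Mathlib

/-- Glueing singletons: for a matching family `(a_i)` in a symmetric `Ω`-category over a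
frame `Ω`, the map `σ b = ⨆ i, M b (a i)` is a symmetric singleton of type `⨆ i, t (a i)`. -/
theorem stmt_10 {Ω : Type*} [Order.Frame Ω] {A : Type*} (t : A → Ω) (M : A → A → Ω)
    (hbound : ∀ a b, M a b ≤ t a ⊓ t b)
    (hrefl : ∀ a, t a ≤ M a a)
    (htrans : ∀ a b c, M a b ⊓ M b c ≤ M a c)
    (hsymm : ∀ a b, M a b = M b a)
    {I : Type*} (a : I → A)
    (hmatch : ∀ i j, t (a i) ⊓ t (a j) ≤ M (a i) (a j)) :
    (∀ b c, M b c ⊓ (⨆ i, M c (a i)) ≤ ⨆ i, M b (a i)) ∧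
    (∀ b c, (⨆ i, M b (a i)) ⊓ (⨆ i, M c (a i)) ≤ M b c) ∧
    ((⨆ i, t (a i)) ≤ ⨆ b : A, ⨆ i, M b (a i)) := by
  refine ⟨?_, ?_, ?_⟩
  · intro b c
    rw [inf_iSup_eq]
    exact iSup_mono fun i => htrans b c (a i)
  · intro b c
    rw [iSup_inf_eq]
    refine iSup_le fun i => ?_
    rw [inf_iSup_eq]
    refine iSup_le fun j => ?_
    have h1 : M b (a i) ⊓ M c (a j) ≤ M (a i) (a j) := by
      calc M b (a i) ⊓ M c (a j) ≤ t (a i) ⊓ t (a j) :=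
            inf_le_inf ((hbound b (a i)).trans inf_le_right)
              ((hbound c (a j)).trans inf_le_right)
        _ ≤ M (a i) (a j) := hmatch i j
    calc M b (a i) ⊓ M c (a j)
        ≤ (M b (a i) ⊓ M (a i) (a j)) ⊓ M (a j) c := by
          rw [hsymm (a j) c]
          exact le_inf (le_inf inf_le_left h1) inf_le_right
      _ ≤ M b (a j) ⊓ M (a j) c := inf_le_inf_right _ (htrans b (a i) (a j))
      _ ≤ M b c := htrans b (a j) c
  · refine iSup_le fun i => ?_
    exact le_iSup_of_le (a i) (le_iSup_of_le i (hrefl (a i)))
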